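/- arXiv:1604.07225 — 2 statements merged into one kernel-verified Lean document; each statement's English description precedes it below -/
import Mathlib

section
/- Let n ∈ ℕ, let ∅ ≠ 𝒱 ⊆ 𝒱ₙ and ℰ ⊆ ℰₙ, and let m, k ∈ ℕ. If the chromatic number satisfies χ(G(𝒱, ℰ)) ≥ 2 and k < log₂(χ(G(𝒱, ℰ))), then player D has a winning strategy in the formula size game FS_{m,k}(𝒱, ℰ). -/
universe u v

/-- A Kripke model for a set `Φ` of proposition symbols: a set of worlds `W`,
an accessibility relation `R` and a valuation `V`. -/
structure KripkeModel (Φ : Type) : Type (u + 1) where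
  W : Type u
  R : W → W → Prop
  V : Φ → W → Prop

/-- A pointed Kripke model: a Kripke model together with a distinguished world. -/
structure PointedModel (Φ : Type) : Type (u + 1) where
  M : KripkeModel.{u} Φ
  w : M.W

/-- Formulas of basic modal logic over the empty set of proposition symbols, in negation
normal form, generated from the atomic constants `⊤` and `⊥` by `∧`, `∨`, `◇`, `□`. -/
inductive MLF : Type where
  | top
  | bot
  | and (φ ψ : MLF)
  | or (φ ψ : MLF)
  | dia (φ : MLF)
  | box (φ : MLF)

/-- Standard Kripke semantics over frames (models for `Φ = ∅`). -/
def MLFSat (M : KripkeModel.{u} Empty) : M.W → MLF → Prop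
  | _, .top => True
  | _, .bot => False
  | w, .and φ ψ => MLFSat M w φ ∧ MLFSat M w ψ
  | w, .or φ ψ => MLFSat M w φ ∨ MLFSat M w ψ
  | w, .dia φ => ∃ x, M.R w x ∧ MLFSat M x φ
  | w, .box φ => ∀ x, M.R w x → MLFSat M x φ

/-- Literals over `Φ = ∅` are the atomic constants `⊤` and `⊥`. -/
def MLFIsLiteral : MLF → Prop
  | .top => True
  | .bot => True
  | _ => False

/-- The modal size `ms(φ)`: the number of modal operators `◇`, `□` in `φ`. -/
def mlfms : MLF → ℕ
  | .top => 0
  | .bot => 0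
  | .and φ ψ => mlfms φ + mlfms ψ
  | .or φ ψ => mlfms φ + mlfms ψ
  | .dia φ => mlfms φ + 1
  | .box φ => mlfms φ + 1

/-- The connective size `cs(φ)`: the number of binary connectives `∧`, `∨` in `φ`. -/
def mlfcs : MLF → ℕ
  | .top => 0
  | .bot => 0
  | .and φ ψ => mlfcs φ + mlfcs ψ + 1
  | .or φ ψ => mlfcs φ + mlfcs ψ + 1
  | .dia φ => mlfcs φ
  | .box φ => mlfcs φ

/-- A formula `φ` separates the classes `A` and `B` of pointed frames if `φ` is true in
every pointed frame of `A` and false in every pointed frame of `B`. -/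
def MLFSeparates (φ : MLF) (A B : Set (PointedModel.{u} Empty)) : Prop :=
  (∀ P ∈ A, MLFSat P.M P.w φ) ∧ (∀ P ∈ B, ¬ MLFSat P.M P.w φ)

/-- The set of successors of a pointed model: the same model pointed at any `R`-successor
of the distinguished world. -/
def succs {Φ : Type} (P : PointedModel.{u} Φ) : Set (PointedModel.{u} Φ) :=
  {Q | ∃ x : P.M.W, P.M.R P.w x ∧ Q = ⟨P.M, x⟩}

/-- `◇A`: all successors of all models in `A`. -/
def diaSet {Φ : Type} (A : Set (PointedModel.{u} Φ)) : Set (PointedModel.{u} Φ) :=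
  ⋃ P ∈ A, succs P

/-- `DWins m k A B` says that the player D (duplicator) has a winning strategy in the
formula size game `FS_{m,k}(A, B)` (over `Φ = ∅`, where the literals are `⊤` and `⊥`):
S does not win the current position (no literal separates `A` and `B`), for every
splitting move of S, D can choose a continuation that D wins, and D wins the position
resulting from every successor move of S. -/
def DWins (m k : ℕ) (A B : Set (PointedModel.{u} Empty)) : Prop :=
  (¬ ∃ φ : MLF, MLFIsLiteral φ ∧ MLFSeparates φ A B) ∧
  (∀ m₁ m₂ k₁ k₂ (A₁ A₂ : Set (PointedModel.{u} Empty)), m₁ + m₂ = m → k₁ + k₂ + 1 = k →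
      A₁ ∪ A₂ = A → DWins m₁ k₁ A₁ B ∨ DWins m₂ k₂ A₂ B) ∧
  (∀ m₁ m₂ k₁ k₂ (B₁ B₂ : Set (PointedModel.{u} Empty)), m₁ + m₂ = m → k₁ + k₂ + 1 = k →
      B₁ ∪ B₂ = B → DWins m₁ k₁ A B₁ ∨ DWins m₂ k₂ A B₂) ∧
  (∀ m' (f : PointedModel.{u} Empty → PointedModel.{u} Empty), m = m' + 1 →
      (∀ P ∈ A, f P ∈ succs P) → DWins m' k (f '' A) (diaSet B)) ∧
  (∀ m' (g : PointedModel.{u} Empty → PointedModel.{u} Empty), m = m' + 1 →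
      (∀ P ∈ B, g P ∈ succs P) → DWins m' k (diaSet A) (g '' B))
termination_by m + k
decreasing_by all_goals omega

/-- The finite levels of the cumulative hierarchy: `V₀ = ∅`, `V_{k+1} = 𝒫(V_k)`. -/
def Vlev : ℕ → ZFSet
  | 0 => ∅
  | n + 1 => ZFSet.powerset (Vlev n)

/-- The converse-membership accessibility relation on sets: `a R b` iff `b ∈ a`. -/
def zmem (a b : ZFSet) : Prop := b ∈ a

/-- `M_a`: the subframe of the frame `(V, ∋)` generated by the point `a`; its domain
consists of all points reachable from `a` by iterated membership. -/
def Ma (a : ZFSet) : KripkeModel.{1} Empty where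
  W := {x : ZFSet // Relation.ReflTransGen zmem a x}
  R := fun x y => zmem x.1 y.1
  V := fun p _ => p.elim

/-- The pointed frame `(M_a, a)`. -/
def Mpt (a : ZFSet) : PointedModel.{1} Empty :=
  ⟨Ma a, ⟨a, Relation.ReflTransGen.refl⟩⟩

/-- `⋁A`: the pointed frame obtained from a set `A` of pointed frames by adding a new
point (the new distinguished point) with `R`-edges to the distinguished point of each
member of `A`, keeping all original edges. -/
def vee (A : Set (PointedModel.{u} Empty)) : PointedModel.{u + 1} Empty where
  M :=
    { W := Option ((Q : {P : PointedModel.{u} Empty // P ∈ A}) × Q.1.M.W)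
      R := fun x y =>
        (∃ Q : {P : PointedModel.{u} Empty // P ∈ A}, x = none ∧ y = some ⟨Q, Q.1.w⟩) ∨
        (∃ (Q : {P : PointedModel.{u} Empty // P ∈ A}) (a b : Q.1.M.W),
          Q.1.M.R a b ∧ x = some ⟨Q, a⟩ ∧ y = some ⟨Q, b⟩)
      V := fun p _ => p.elim }
  w := none

/-- `𝒱ₙ = { ⋁{(M_a, a)} : a ∈ V_{n+1} }`. -/
def calV (n : ℕ) : Set (PointedModel.{2} Empty) :=
  {P | ∃ a, a ∈ Vlev (n + 1) ∧ P = vee {Mpt a}}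

/-- `ℰₙ = { ⋁{(M_a, a), (M_b, b)} : a, b ∈ V_{n+1}, a ≠ b }`. -/
def calE (n : ℕ) : Set (PointedModel.{2} Empty) :=
  {P | ∃ a b, a ∈ Vlev (n + 1) ∧ b ∈ Vlev (n + 1) ∧ a ≠ b ∧ P = vee {Mpt a, Mpt b}}

/-- The vertex set of the graph `G(𝒱, ℰ)`: the pointed frames `(M, w)` with
`⋁{(M, w)} ∈ 𝒱`. -/
def Vtx (VV : Set (PointedModel.{2} Empty)) : Type 2 :=
  {P : PointedModel.{1} Empty // vee {P} ∈ VV}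

/-- The edge relation of the graph `G(𝒱, ℰ)`: `(M, w)` and `(M', w')` are adjacent iff
`⋁{(M, w), (M', w')} ∈ ℰ`. -/
def Erel (VV EE : Set (PointedModel.{2} Empty)) : Vtx VV → Vtx VV → Prop :=
  fun P Q => vee {P.1, Q.1} ∈ EE

/-- `c` is a proper coloring of the graph with vertex set `X` and edge relation `E`:
adjacent vertices get different colors. -/
def IsProperColoring {X : Type v} (E : X → X → Prop) {k : ℕ} (c : X → Fin k) : Prop :=
  ∀ a b, E a b → c a ≠ c b

/-- The chromatic number: the smallest `k ∈ ℕ` for which there is a proper `k`-coloring. -/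
noncomputable def chrom {X : Type v} (E : X → X → Prop) : ℕ :=
  sInf {k : ℕ | ∃ c : X → Fin k, IsProperColoring E c}


universe w

section Aux

/-- `Z` is a bisimulation between pointed models `P` and `Q` (over `Φ = ∅` there is no
atom condition). -/
def IsBisim {Φ : Type} (P : PointedModel.{u} Φ) (Q : PointedModel.{v} Φ)
    (Z : P.M.W → Q.M.W → Prop) : Prop :=
  Z P.w Q.w ∧
  (∀ a b, Z a b → ∀ a', P.M.R a a' → ∃ b', Q.M.R b b' ∧ Z a' b') ∧
  (∀ a b, Z a b → ∀ b', Q.M.R b b' → ∃ a', P.M.R a a' ∧ Z a' b')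

/-- Bisimilarity of pointed models. -/
def Bisim {Φ : Type} (P : PointedModel.{u} Φ) (Q : PointedModel.{v} Φ) : Prop :=
  ∃ Z, IsBisim P Q Z

theorem Bisim.symm {Φ : Type} {P : PointedModel.{u} Φ} {Q : PointedModel.{v} Φ}
    (h : Bisim P Q) : Bisim Q P := by
  obtain ⟨Z, h0, hf, hb⟩ := h
  exact ⟨fun q p => Z p q, h0,
    fun q p hab q' hR => hb p q hab q' hR,
    fun q p hab p' hR => hf p q hab p' hR⟩

theorem Bisim.trans {Φ : Type} {P : PointedModel.{u} Φ} {Q : PointedModel.{v} Φ}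
    {R : PointedModel.{w} Φ} (h1 : Bisim P Q) (h2 : Bisim Q R) : Bisim P R := by
  obtain ⟨Z1, i1, f1, b1⟩ := h1
  obtain ⟨Z2, i2, f2, b2⟩ := h2
  refine ⟨fun a c => ∃ b, Z1 a b ∧ Z2 b c, ⟨Q.w, i1, i2⟩, ?_, ?_⟩
  · rintro a c ⟨b, hab, hbc⟩ a' hR
    obtain ⟨b', hR1, hZ1⟩ := f1 a b hab a' hR
    obtain ⟨c', hR2, hZ2⟩ := f2 b c hbc b' hR1
    exact ⟨c', hR2, b', hZ1, hZ2⟩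
  · rintro a c ⟨b, hab, hbc⟩ c' hR
    obtain ⟨b', hR2, hZ2⟩ := b2 b c hbc c' hR
    obtain ⟨a', hR1, hZ1⟩ := b1 a b hab b' hR2
    exact ⟨a', hR1, b', hZ1, hZ2⟩

/-- A point of `⋁S` inside the copy of a member `Q0` of `S` is bisimilar to the
corresponding point of `Q0` itself. -/
theorem veeBisim {S : Set (PointedModel.{u} Empty)} (Q0 : {P : PointedModel.{u} Empty // P ∈ S})
    (vv : Q0.1.M.W) :
    Bisim (⟨(vee S).M, some ⟨Q0, vv⟩⟩ : PointedModel.{u+1} Empty) ⟨Q0.1.M, vv⟩ := by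
  refine ⟨fun x y => x = some ⟨Q0, y⟩, rfl, ?_, ?_⟩
  · rintro a b rfl a' hR
    rcases hR with ⟨Q, hbad, -⟩ | ⟨Q, c, d, hRcd, hc, hd⟩
    · exact (Option.some_ne_none _ hbad).elim
    · injection hc with hc'
      have hQ : Q0 = Q := congrArg Sigma.fst hc'
      subst hQ
      have hbc : b = c := eq_of_heq (Sigma.ext_iff.mp hc').2
      subst hbc
      exact ⟨d, hRcd, hd⟩
  · rintro a b rfl b' hR
    exact ⟨some ⟨Q0, b'⟩, Or.inr ⟨Q0, b, b', hR, rfl, rfl⟩, rfl⟩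

/-- Points of `⋁S` and `⋁S'` in copies of a common member are bisimilar. -/
theorem veeBisim₂ {S S' : Set (PointedModel.{u} Empty)}
    (Q0 : {P : PointedModel.{u} Empty // P ∈ S}) (Q1 : {P : PointedModel.{u} Empty // P ∈ S'})
    (h : Q0.1 = Q1.1) :
    Bisim (⟨(vee S).M, some ⟨Q0, Q0.1.w⟩⟩ : PointedModel.{u+1} Empty)
          (⟨(vee S').M, some ⟨Q1, Q1.1.w⟩⟩ : PointedModel.{u+1} Empty) := by
  obtain ⟨P, hP⟩ := Q0
  obtain ⟨P', hP'⟩ := Q1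
  obtain rfl : P = P' := h
  exact (veeBisim ⟨P, hP⟩ P.w).trans (veeBisim ⟨P, hP'⟩ P.w).symm

/-- If the position contains a bisimilar pair, D wins. -/
theorem lemA (m k : ℕ) (A B : Set (PointedModel.{2} Empty))
    (h : ∃ P, P ∈ A ∧ ∃ Q, Q ∈ B ∧ Bisim P Q) : DWins m k A B := by
  obtain ⟨P, hP, Q, hQ, Z, hZ0, hforth, hback⟩ := h
  rw [DWins]
  refine ⟨?_, ?_, ?_, ?_, ?_⟩
  · rintro ⟨φ, hlit, hsep⟩
    cases φ with
    | top => exact hsep.2 Q hQ trivial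
    | bot => exact hsep.1 P hP
    | and φ ψ => exact hlit
    | or φ ψ => exact hlit
    | dia φ => exact hlit
    | box φ => exact hlit
  · intro m₁ m₂ k₁ k₂ A₁ A₂ hm hk hA
    by_cases h1 : P ∈ A₁
    · exact Or.inl (lemA m₁ k₁ A₁ B ⟨P, h1, Q, hQ, Z, hZ0, hforth, hback⟩)
    · have hP' : P ∈ A₁ ∪ A₂ := by rw [hA]; exact hP
      exact Or.inr (lemA m₂ k₂ A₂ B ⟨P, hP'.resolve_left h1, Q, hQ, Z, hZ0, hforth, hback⟩)
  · intro m₁ m₂ k₁ k₂ B₁ B₂ hm hk hB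
    by_cases h1 : Q ∈ B₁
    · exact Or.inl (lemA m₁ k₁ A B₁ ⟨P, hP, Q, h1, Z, hZ0, hforth, hback⟩)
    · have hQ' : Q ∈ B₁ ∪ B₂ := by rw [hB]; exact hQ
      exact Or.inr (lemA m₂ k₂ A B₂ ⟨P, hP, Q, hQ'.resolve_left h1, Z, hZ0, hforth, hback⟩)
  · intro m' f hm hf
    obtain ⟨x, hRx, hfP⟩ := hf P hP
    obtain ⟨y, hRy, hZxy⟩ := hforth P.w Q.w hZ0 x hRx
    refine lemA m' k _ _ ⟨f P, Set.mem_image_of_mem f hP, ⟨Q.M, y⟩,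
      Set.mem_biUnion hQ ⟨y, hRy, rfl⟩, ?_⟩
    rw [hfP]
    exact ⟨Z, hZxy, hforth, hback⟩
  · intro m' g hm hg
    obtain ⟨y, hRy, hgQ⟩ := hg Q hQ
    obtain ⟨x, hRx, hZxy⟩ := hback P.w Q.w hZ0 y hRy
    refine lemA m' k _ _ ⟨⟨P.M, x⟩, Set.mem_biUnion hP ⟨x, hRx, rfl⟩,
      g Q, Set.mem_image_of_mem g hQ, ?_⟩
    rw [hgQ]
    exact ⟨Z, hZxy, hforth, hback⟩
termination_by m + k
decreasing_by all_goals omega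

theorem split_left {k₁ k₂ : ℕ} (A₁ A₂ B : Set (PointedModel.{2} Empty))
    (h : ¬ ∃ c : Vtx (A₁ ∪ A₂) → Fin (2 ^ (k₁ + k₂ + 1)),
      IsProperColoring (Erel (A₁ ∪ A₂) B) c) :
    (¬ ∃ c : Vtx A₁ → Fin (2 ^ k₁), IsProperColoring (Erel A₁ B) c) ∨
    (¬ ∃ c : Vtx A₂ → Fin (2 ^ k₂), IsProperColoring (Erel A₂ B) c) := by
  classical
  by_contra hc
  push_neg at hc
  obtain ⟨⟨c₁, hc₁⟩, ⟨c₂, hc₂⟩⟩ := hc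
  apply h
  have hle : 2 ^ k₁ + 2 ^ k₂ ≤ 2 ^ (k₁ + k₂ + 1) := by
    have h1 : 2 ^ k₁ ≤ 2 ^ (k₁ + k₂) := Nat.pow_le_pow_right (by norm_num) (by omega)
    have h2 : 2 ^ k₂ ≤ 2 ^ (k₁ + k₂) := Nat.pow_le_pow_right (by norm_num) (by omega)
    have h3 : 2 ^ (k₁ + k₂ + 1) = 2 ^ (k₁ + k₂) + 2 ^ (k₁ + k₂) := by ring
    omega
  refine ⟨fun X => Fin.castLE hle (finSumFinEquiv
      (if h1 : vee {X.1} ∈ A₁ then Sum.inl (c₁ ⟨X.1, h1⟩)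
       else Sum.inr (c₂ ⟨X.1, ((Set.mem_union _ _ _).mp X.2).resolve_left h1⟩))), ?_⟩
  intro a b hab hcc
  have hcc' := finSumFinEquiv.injective (Fin.castLE_injective hle hcc)
  by_cases ha : vee {a.1} ∈ A₁ <;> by_cases hb : vee {b.1} ∈ A₁
  · rw [dif_pos ha, dif_pos hb] at hcc'
    exact hc₁ ⟨a.1, ha⟩ ⟨b.1, hb⟩ hab (Sum.inl.inj hcc')
  · rw [dif_pos ha, dif_neg hb] at hcc'
    exact Sum.inl_ne_inr hcc'
  · rw [dif_neg ha, dif_pos hb] at hcc'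
    exact Sum.inr_ne_inl hcc'
  · rw [dif_neg ha, dif_neg hb] at hcc'
    exact hc₂ ⟨a.1, _⟩ ⟨b.1, _⟩ hab (Sum.inr.inj hcc')

theorem split_right {k₁ k₂ : ℕ} (A B₁ B₂ : Set (PointedModel.{2} Empty))
    (h : ¬ ∃ c : Vtx A → Fin (2 ^ (k₁ + k₂ + 1)),
      IsProperColoring (Erel A (B₁ ∪ B₂)) c) :
    (¬ ∃ c : Vtx A → Fin (2 ^ k₁), IsProperColoring (Erel A B₁) c) ∨
    (¬ ∃ c : Vtx A → Fin (2 ^ k₂), IsProperColoring (Erel A B₂) c) := by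
  by_contra hc
  push_neg at hc
  obtain ⟨⟨c₁, hc₁⟩, ⟨c₂, hc₂⟩⟩ := hc
  apply h
  have hle : 2 ^ k₁ * 2 ^ k₂ ≤ 2 ^ (k₁ + k₂ + 1) := by
    rw [← pow_add]
    exact Nat.pow_le_pow_right (by norm_num) (by omega)
  refine ⟨fun X => Fin.castLE hle (finProdFinEquiv (c₁ X, c₂ X)), ?_⟩
  intro a b hab hcc
  have hcc' := finProdFinEquiv.injective (Fin.castLE_injective hle hcc)
  rcases (Set.mem_union _ _ _).mp hab with hB | hB
  · exact hc₁ a b hB (congrArg Prod.fst hcc')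
  · exact hc₂ a b hB (congrArg Prod.snd hcc')

/-- The main induction: if the graph of the position has no proper coloring with `2 ^ k`
colors, then D wins. -/
theorem lemB (k m : ℕ) (A B : Set (PointedModel.{2} Empty))
    (h : ¬ ∃ c : Vtx A → Fin (2 ^ k), IsProperColoring (Erel A B) c) :
    DWins m k A B := by
  have hedge : ∃ X Y : Vtx A, Erel A B X Y := by
    by_contra he
    push_neg at he
    exact h ⟨fun _ => ⟨0, Nat.two_pow_pos k⟩, fun a b hab => (he a b hab).elim⟩
  obtain ⟨X, Y, hXY⟩ := hedge
  rw [DWins]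
  refine ⟨?_, ?_, ?_, ?_, ?_⟩
  · rintro ⟨φ, hlit, hsep⟩
    cases φ with
    | top => exact hsep.2 (vee {X.1, Y.1}) hXY trivial
    | bot => exact hsep.1 (vee {X.1}) X.2
    | and φ ψ => exact hlit
    | or φ ψ => exact hlit
    | dia φ => exact hlit
    | box φ => exact hlit
  · intro m₁ m₂ k₁ k₂ A₁ A₂ hm hkk hA
    subst hkk
    subst hA
    rcases split_left A₁ A₂ B h with h1 | h1
    · exact Or.inl (lemB k₁ m₁ A₁ B h1)
    · exact Or.inr (lemB k₂ m₂ A₂ B h1)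
  · intro m₁ m₂ k₁ k₂ B₁ B₂ hm hkk hB
    subst hkk
    subst hB
    rcases split_right A B₁ B₂ h with h1 | h1
    · exact Or.inl (lemB k₁ m₁ A B₁ h1)
    · exact Or.inr (lemB k₂ m₂ A B₂ h1)
  · intro m' f hm hf
    obtain ⟨x, hRx, hfP⟩ := hf (vee {X.1}) X.2
    rcases hRx with ⟨Q0, -, hx⟩ | ⟨Q0, a, b, -, hbad, -⟩
    · refine lemA m' k _ _ ⟨f (vee {X.1}), Set.mem_image_of_mem f X.2,
        ⟨(vee {X.1, Y.1}).M, some ⟨⟨X.1, Set.mem_insert _ _⟩, X.1.w⟩⟩,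
        Set.mem_biUnion hXY ⟨some ⟨⟨X.1, Set.mem_insert _ _⟩, X.1.w⟩,
          Or.inl ⟨⟨X.1, Set.mem_insert _ _⟩, rfl, rfl⟩, rfl⟩, ?_⟩
      rw [hfP, hx]
      exact veeBisim₂ Q0 ⟨X.1, Set.mem_insert _ _⟩ Q0.2
    · exact (Option.some_ne_none _ hbad.symm).elim
  · intro m' g hm hg
    obtain ⟨y, hRy, hgQ⟩ := hg (vee {X.1, Y.1}) hXY
    rcases hRy with ⟨Q0, -, hy⟩ | ⟨Q0, a, b, -, hbad, -⟩
    · rcases Set.mem_insert_iff.mp Q0.2 with hQ | hQ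
      · refine lemA m' k _ _
          ⟨⟨(vee {X.1}).M, some ⟨⟨X.1, Set.mem_singleton _⟩, X.1.w⟩⟩,
           Set.mem_biUnion X.2 ⟨some ⟨⟨X.1, Set.mem_singleton _⟩, X.1.w⟩,
             Or.inl ⟨⟨X.1, Set.mem_singleton _⟩, rfl, rfl⟩, rfl⟩,
           g (vee {X.1, Y.1}), Set.mem_image_of_mem g hXY, ?_⟩
        rw [hgQ, hy]
        exact veeBisim₂ ⟨X.1, Set.mem_singleton _⟩ Q0 hQ.symm
      · have hQ' : Q0.1 = Y.1 := hQ
        refine lemA m' k _ _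
          ⟨⟨(vee {Y.1}).M, some ⟨⟨Y.1, Set.mem_singleton _⟩, Y.1.w⟩⟩,
           Set.mem_biUnion Y.2 ⟨some ⟨⟨Y.1, Set.mem_singleton _⟩, Y.1.w⟩,
             Or.inl ⟨⟨Y.1, Set.mem_singleton _⟩, rfl, rfl⟩, rfl⟩,
           g (vee {X.1, Y.1}), Set.mem_image_of_mem g hXY, ?_⟩
        rw [hgQ, hy]
        exact veeBisim₂ ⟨Y.1, Set.mem_singleton _⟩ Q0 hQ'.symm
    · exact (Option.some_ne_none _ hbad.symm).elim
termination_by k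
decreasing_by all_goals omega

end Aux

/-- **Lemma 16 (Hella–Vilander).**  If `∅ ≠ 𝒱 ⊆ 𝒱ₙ`, `ℰ ⊆ ℰₙ`, `χ(G(𝒱, ℰ)) ≥ 2` and
`k < log₂ χ(G(𝒱, ℰ))`, then D has a winning strategy in the game `FS_{m,k}(𝒱, ℰ)`. -/
theorem dwins_of_chrom (n m k : ℕ) (VV EE : Set (PointedModel.{2} Empty))
    (hne : VV.Nonempty) (hV : VV ⊆ calV n) (hE : EE ⊆ calE n)
    (h2 : 2 ≤ chrom (Erel VV EE))
    (hk : (k : ℝ) < Real.logb 2 (chrom (Erel VV EE))) :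
    DWins m k VV EE := by
  apply lemB
  rintro ⟨c, hc⟩
  have hle : chrom (Erel VV EE) ≤ 2 ^ k := Nat.sInf_le ⟨c, hc⟩
  have hχ : (0 : ℝ) < (chrom (Erel VV EE) : ℝ) := by
    have : (2 : ℕ) ≤ chrom (Erel VV EE) := h2
    exact_mod_cast lt_of_lt_of_le (by norm_num) this
  have hlt : (2 : ℝ) ^ (k : ℝ) < (chrom (Erel VV EE) : ℝ) :=
    (Real.lt_logb_iff_rpow_lt (by norm_num) hχ).mp hk
  rw [Real.rpow_natCast] at hlt
  have hle' : ((chrom (Erel VV EE) : ℝ)) ≤ ((2 : ℝ) ^ k) := by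
    exact_mod_cast hle
  linarith
end

section
/- For every n ≥ 1 and all m, k ∈ ℕ with k < tower(n−1), player D has a winning strategy in the formula size game FS_{m,k}(𝒱ₙ, ℰₙ). -/
universe u v

/-- The exponential tower function: `tower 0 = 1` and `tower (n+1) = 2 ^ tower n`. -/
def tower : ℕ → ℕ
  | 0 => 1
  | n + 1 => 2 ^ tower n


/-! ### Auxiliary machinery -/

section GameLemma

theorem dwins_of_no_formula (m k : ℕ) (A B : Set (PointedModel.{u} Empty))
    (h : ∀ φ : MLF, mlfms φ ≤ m → mlfcs φ ≤ k → ¬ MLFSeparates φ A B) :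
    DWins m k A B := by
  rw [DWins]
  refine ⟨?_, ?_, ?_, ?_, ?_⟩
  · rintro ⟨φ, hlit, hsep⟩
    cases φ with
    | top => exact h .top (by simp [mlfms]) (by simp [mlfcs]) hsep
    | bot => exact h .bot (by simp [mlfms]) (by simp [mlfcs]) hsep
    | _ => simp [MLFIsLiteral] at hlit
  · intro m₁ m₂ k₁ k₂ A₁ A₂ hm hk hA
    by_contra hc
    push_neg at hc
    obtain ⟨h1, h2⟩ := hc
    have e1 : ∃ φ, mlfms φ ≤ m₁ ∧ mlfcs φ ≤ k₁ ∧ MLFSeparates φ A₁ B := by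
      by_contra he; push_neg at he
      exact h1 (dwins_of_no_formula m₁ k₁ A₁ B he)
    have e2 : ∃ φ, mlfms φ ≤ m₂ ∧ mlfcs φ ≤ k₂ ∧ MLFSeparates φ A₂ B := by
      by_contra he; push_neg at he
      exact h2 (dwins_of_no_formula m₂ k₂ A₂ B he)
    obtain ⟨φ₁, hm1, hk1, hs1⟩ := e1
    obtain ⟨φ₂, hm2, hk2, hs2⟩ := e2
    refine h (.or φ₁ φ₂) (by simp only [mlfms]; omega) (by simp only [mlfcs]; omega) ⟨?_, ?_⟩
    · intro P hP
      rw [← hA] at hP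
      rcases hP with h' | h'
      · exact Or.inl (hs1.1 P h')
      · exact Or.inr (hs2.1 P h')
    · intro P hP
      rintro (hx | hx)
      · exact hs1.2 P hP hx
      · exact hs2.2 P hP hx
  · intro m₁ m₂ k₁ k₂ B₁ B₂ hm hk hB
    by_contra hc
    push_neg at hc
    obtain ⟨h1, h2⟩ := hc
    have e1 : ∃ φ, mlfms φ ≤ m₁ ∧ mlfcs φ ≤ k₁ ∧ MLFSeparates φ A B₁ := by
      by_contra he; push_neg at he
      exact h1 (dwins_of_no_formula m₁ k₁ A B₁ he)
    have e2 : ∃ φ, mlfms φ ≤ m₂ ∧ mlfcs φ ≤ k₂ ∧ MLFSeparates φ A B₂ := by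
      by_contra he; push_neg at he
      exact h2 (dwins_of_no_formula m₂ k₂ A B₂ he)
    obtain ⟨φ₁, hm1, hk1, hs1⟩ := e1
    obtain ⟨φ₂, hm2, hk2, hs2⟩ := e2
    refine h (.and φ₁ φ₂) (by simp only [mlfms]; omega) (by simp only [mlfcs]; omega) ⟨?_, ?_⟩
    · exact fun P hP => ⟨hs1.1 P hP, hs2.1 P hP⟩
    · intro P hP
      rw [← hB] at hP
      rintro ⟨hx1, hx2⟩
      rcases hP with h' | h'
      · exact hs1.2 P h' hx1
      · exact hs2.2 P h' hx2
  · intro m' f hm hf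
    refine dwins_of_no_formula m' k _ _ ?_
    intro φ hms hcs hsep
    refine h (.dia φ) (by simp only [mlfms]; omega) (by simpa [mlfcs] using hcs) ⟨?_, ?_⟩
    · intro P hP
      obtain ⟨x, hx, hfx⟩ := hf P hP
      have hs := hsep.1 (f P) ⟨P, hP, rfl⟩
      rw [hfx] at hs
      exact ⟨x, hx, hs⟩
    · rintro Q hQ ⟨x, hx, hsat⟩
      exact hsep.2 ⟨Q.M, x⟩ (Set.mem_biUnion hQ ⟨x, hx, rfl⟩) hsat
  · intro m' g hm hg
    refine dwins_of_no_formula m' k _ _ ?_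
    intro φ hms hcs hsep
    refine h (.box φ) (by simp only [mlfms]; omega) (by simpa [mlfcs] using hcs) ⟨?_, ?_⟩
    · intro P hP x hx
      exact hsep.1 ⟨P.M, x⟩ (Set.mem_biUnion hP ⟨x, hx, rfl⟩)
    · intro Q hQ hbox
      obtain ⟨x, hx, hgx⟩ := hg Q hQ
      refine hsep.2 (g Q) ⟨Q, hQ, rfl⟩ ?_
      rw [hgx]
      exact hbox x hx
termination_by m + k
decreasing_by all_goals omega

end GameLemma

section VeeLemmas

variable {A : Set (PointedModel.{u} Empty)}

lemma vee_R_none {y} :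
    (vee A).M.R none y ↔ ∃ Q : {P : PointedModel.{u} Empty // P ∈ A}, y = some ⟨Q, Q.1.w⟩ := by
  constructor
  · rintro (⟨Q, -, rfl⟩ | ⟨Q, a, b, hab, h, -⟩)
    · exact ⟨Q, rfl⟩
    · exact nomatch h
  · rintro ⟨Q, rfl⟩
    exact Or.inl ⟨Q, rfl, rfl⟩

lemma vee_R_some {Q : {P : PointedModel.{u} Empty // P ∈ A}} {v : Q.1.M.W} {y} :
    (vee A).M.R (some ⟨Q, v⟩) y ↔ ∃ b, Q.1.M.R v b ∧ y = some ⟨Q, b⟩ := by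
  constructor
  · rintro (⟨Q', h, -⟩ | ⟨Q', a, b, hab, h1, rfl⟩)
    · exact nomatch h
    · injection h1 with h2
      rcases Sigma.mk.inj_iff.mp h2 with ⟨rfl, h3⟩
      cases eq_of_heq h3
      exact ⟨b, hab, rfl⟩
  · rintro ⟨b, hb, rfl⟩
    exact Or.inr ⟨Q, v, b, hb, rfl, rfl⟩

lemma sat_vee_some (ψ : MLF) :
    ∀ (Q : {P : PointedModel.{u} Empty // P ∈ A}) (v : Q.1.M.W),
      MLFSat (vee A).M (some ⟨Q, v⟩) ψ ↔ MLFSat Q.1.M v ψ := by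
  induction ψ with
  | top => intro Q v; simp [MLFSat]
  | bot => intro Q v; simp [MLFSat]
  | and φ χ ih1 ih2 => intro Q v; simp only [MLFSat]; rw [ih1, ih2]
  | or φ χ ih1 ih2 => intro Q v; simp only [MLFSat]; rw [ih1, ih2]
  | dia φ ih =>
    intro Q v
    simp only [MLFSat]
    constructor
    · rintro ⟨y, hR, hy⟩
      obtain ⟨b, hb, rfl⟩ := vee_R_some.mp hR
      exact ⟨b, hb, (ih Q b).mp hy⟩
    · rintro ⟨b, hb, hsat⟩
      exact ⟨some ⟨Q, b⟩, vee_R_some.mpr ⟨b, hb, rfl⟩, (ih Q b).mpr hsat⟩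
  | box φ ih =>
    intro Q v
    simp only [MLFSat]
    constructor
    · intro H b hb
      exact (ih Q b).mp (H (some ⟨Q, b⟩) (vee_R_some.mpr ⟨b, hb, rfl⟩))
    · intro H y hR
      obtain ⟨b, hb, rfl⟩ := vee_R_some.mp hR
      exact (ih Q b).mpr (H b hb)

lemma sat_vee_dia (φ : MLF) :
    MLFSat (vee A).M none (.dia φ) ↔
      ∃ Q : {P : PointedModel.{u} Empty // P ∈ A}, MLFSat Q.1.M Q.1.w φ := by
  simp only [MLFSat]
  constructor
  · rintro ⟨y, hR, hy⟩
    obtain ⟨Q, rfl⟩ := vee_R_none.mp hR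
    exact ⟨Q, (sat_vee_some φ Q Q.1.w).mp hy⟩
  · rintro ⟨Q, h⟩
    exact ⟨some ⟨Q, Q.1.w⟩, vee_R_none.mpr ⟨Q, rfl⟩, (sat_vee_some φ Q Q.1.w).mpr h⟩

lemma sat_vee_box (φ : MLF) :
    MLFSat (vee A).M none (.box φ) ↔
      ∀ Q : {P : PointedModel.{u} Empty // P ∈ A}, MLFSat Q.1.M Q.1.w φ := by
  simp only [MLFSat]
  constructor
  · intro H Q
    exact (sat_vee_some φ Q Q.1.w).mp (H (some ⟨Q, Q.1.w⟩) (vee_R_none.mpr ⟨Q, rfl⟩))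
  · intro H y hR
    obtain ⟨Q, rfl⟩ := vee_R_none.mp hR
    exact (sat_vee_some φ Q Q.1.w).mpr (H Q)

end VeeLemmas

/-- Truth of `ψ` at the pointed frame `(M_a, a)`. -/
def sval (ψ : MLF) (a : ZFSet) : Prop := MLFSat (Mpt a).M (Mpt a).w ψ

lemma sat_single_dia (a : ZFSet) (φ : MLF) :
    MLFSat (vee {Mpt a}).M none (.dia φ) ↔ sval φ a := by
  rw [sat_vee_dia]
  constructor
  · rintro ⟨⟨P, hP⟩, h⟩
    rw [Set.mem_singleton_iff] at hP
    subst hP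
    exact h
  · intro h
    exact ⟨⟨Mpt a, rfl⟩, h⟩

lemma sat_single_box (a : ZFSet) (φ : MLF) :
    MLFSat (vee {Mpt a}).M none (.box φ) ↔ sval φ a := by
  rw [sat_vee_box]
  constructor
  · intro H
    exact H ⟨Mpt a, rfl⟩
  · rintro h ⟨P, hP⟩
    rw [Set.mem_singleton_iff] at hP
    subst hP
    exact h

lemma sat_pair_dia (a b : ZFSet) (φ : MLF) :
    MLFSat (vee {Mpt a, Mpt b}).M none (.dia φ) ↔ sval φ a ∨ sval φ b := by
  rw [sat_vee_dia]
  constructor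
  · rintro ⟨⟨P, hP⟩, h⟩
    rcases hP with rfl | hP
    · exact Or.inl h
    · rw [Set.mem_singleton_iff] at hP
      subst hP
      exact Or.inr h
  · rintro (h | h)
    · exact ⟨⟨Mpt a, Or.inl rfl⟩, h⟩
    · exact ⟨⟨Mpt b, Or.inr rfl⟩, h⟩

lemma sat_pair_box (a b : ZFSet) (φ : MLF) :
    MLFSat (vee {Mpt a, Mpt b}).M none (.box φ) ↔ sval φ a ∧ sval φ b := by
  rw [sat_vee_box]
  constructor
  · intro H
    exact ⟨H ⟨Mpt a, Or.inl rfl⟩, H ⟨Mpt b, Or.inr rfl⟩⟩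
  · rintro ⟨h1, h2⟩ ⟨P, hP⟩
    rcases hP with rfl | hP
    · exact h1
    · rw [Set.mem_singleton_iff] at hP
      subst hP
      exact h2

/-- The subformulas occurring immediately below a top-level modality. -/
def mlfAtoms : MLF → List MLF
  | .top => []
  | .bot => []
  | .and φ ψ => mlfAtoms φ ++ mlfAtoms ψ
  | .or φ ψ => mlfAtoms φ ++ mlfAtoms ψ
  | .dia φ => [φ]
  | .box φ => [φ]

lemma mlfAtoms_length (φ : MLF) : (mlfAtoms φ).length ≤ mlfcs φ + 1 := by
  induction φ with
  | top => simp [mlfAtoms, mlfcs]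
  | bot => simp [mlfAtoms, mlfcs]
  | and φ ψ ih1 ih2 => simp only [mlfAtoms, mlfcs, List.length_append]; omega
  | or φ ψ ih1 ih2 => simp only [mlfAtoms, mlfcs, List.length_append]; omega
  | dia φ _ => simp [mlfAtoms, mlfcs]
  | box φ _ => simp [mlfAtoms, mlfcs]

lemma sat_pair_of_agree (φ : MLF) (a b : ZFSet)
    (hagree : ∀ ψ ∈ mlfAtoms φ, (sval ψ a ↔ sval ψ b))
    (h : MLFSat (vee {Mpt a}).M none φ) :
    MLFSat (vee {Mpt a, Mpt b}).M none φ := by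
  induction φ with
  | top => simp [MLFSat]
  | bot => simp [MLFSat] at h
  | and φ ψ ih1 ih2 =>
    obtain ⟨h1, h2⟩ := h
    exact ⟨ih1 (fun χ hχ => hagree χ (by simp [mlfAtoms, hχ])) h1,
      ih2 (fun χ hχ => hagree χ (by simp [mlfAtoms, hχ])) h2⟩
  | or φ ψ ih1 ih2 =>
    rcases h with h1 | h1
    · exact Or.inl (ih1 (fun χ hχ => hagree χ (by simp [mlfAtoms, hχ])) h1)
    · exact Or.inr (ih2 (fun χ hχ => hagree χ (by simp [mlfAtoms, hχ])) h1)
  | dia φ _ =>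
    rw [sat_single_dia] at h
    rw [sat_pair_dia]
    exact Or.inl h
  | box φ _ =>
    rw [sat_single_box] at h
    rw [sat_pair_box]
    exact ⟨h, (hagree φ (by simp [mlfAtoms])).mp h⟩

lemma sat_pair_of_false (φ : MLF) (a₀ : ZFSet)
    (hfalse : ∀ ψ ∈ mlfAtoms φ, ¬ sval ψ a₀)
    (h : MLFSat (vee {Mpt a₀}).M none φ) (a b : ZFSet) :
    MLFSat (vee {Mpt a, Mpt b}).M none φ := by
  induction φ with
  | top => simp [MLFSat]
  | bot => simp [MLFSat] at h
  | and φ ψ ih1 ih2 =>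
    obtain ⟨h1, h2⟩ := h
    exact ⟨ih1 (fun χ hχ => hfalse χ (by simp [mlfAtoms, hχ])) h1,
      ih2 (fun χ hχ => hfalse χ (by simp [mlfAtoms, hχ])) h2⟩
  | or φ ψ ih1 ih2 =>
    rcases h with h1 | h1
    · exact Or.inl (ih1 (fun χ hχ => hfalse χ (by simp [mlfAtoms, hχ])) h1)
    · exact Or.inr (ih2 (fun χ hχ => hfalse χ (by simp [mlfAtoms, hχ])) h1)
  | dia φ _ =>
    rw [sat_single_dia] at h
    exact absurd h (hfalse φ (by simp [mlfAtoms]))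
  | box φ _ =>
    rw [sat_single_box] at h
    exact absurd h (hfalse φ (by simp [mlfAtoms]))


section Counting

/-- `ptow m` is the number of elements of `Vlev m`. -/
def ptow : ℕ → ℕ
  | 0 => 0
  | m + 1 => 2 ^ ptow m

lemma ptow_succ_eq_tower : ∀ m, ptow (m + 1) = tower m
  | 0 => rfl
  | m + 1 => by rw [ptow, ptow_succ_eq_tower m, tower]

theorem zfset_mem_toSet (a u : ZFSet) : a ∈ u.toSet ↔ a ∈ u := Iff.rfl

/-- The members of `𝒫 v` correspond to the subsets of the members of `v`. -/
noncomputable def powersetEquiv (v : ZFSet.{0}) :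
    ↥(ZFSet.powerset v).toSet ≃ Set ↥v.toSet where
  toFun x := {y | y.1 ∈ x.1}
  invFun S := ⟨ZFSet.sep (fun z => ∃ h : z ∈ v, (⟨z, (zfset_mem_toSet _ _).mpr h⟩ : ↥v.toSet) ∈ S) v,
    by
      rw [zfset_mem_toSet, ZFSet.mem_powerset]
      intro z hz
      exact (ZFSet.mem_sep.mp hz).1⟩
  left_inv x := by
    have hsub : x.1 ⊆ v := ZFSet.mem_powerset.mp ((zfset_mem_toSet _ _).mp x.2)
    apply Subtype.ext
    apply ZFSet.ext
    intro z
    rw [ZFSet.mem_sep]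
    constructor
    · intro h
      obtain ⟨hzv, h2⟩ := h
      obtain ⟨h3, hz⟩ := h2
      exact hz
    · intro hz
      exact ⟨hsub hz, hsub hz, hz⟩
  right_inv S := by
    ext y
    simp only [Set.mem_setOf_eq, ZFSet.mem_sep]
    constructor
    · rintro ⟨-, h, hy⟩
      have he : (⟨y.1, (zfset_mem_toSet _ _).mpr h⟩ : ↥v.toSet) = y := Subtype.ext rfl
      rwa [he] at hy
    · intro hy
      have hv : y.1 ∈ v := (zfset_mem_toSet _ _).mp y.2
      refine ⟨hv, hv, ?_⟩
      have he : (⟨y.1, (zfset_mem_toSet _ _).mpr hv⟩ : ↥v.toSet) = y := Subtype.ext rfl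
      rwa [he]

lemma Vlev_card : ∀ m, Finite ↥(Vlev.{0} m).toSet ∧ Nat.card ↥(Vlev.{0} m).toSet = ptow m := by
  intro m
  induction m with
  | zero =>
    have he : IsEmpty ↥(Vlev 0).toSet := by
      refine ⟨fun x => ZFSet.notMem_empty x.1 ?_⟩
      exact (zfset_mem_toSet _ _).mp x.2
    exact ⟨Finite.of_subsingleton, by rw [Nat.card_of_isEmpty]; rfl⟩
  | succ m ih =>
    obtain ⟨hfin, hcard⟩ := ih
    have e : ↥(Vlev (m + 1)).toSet ≃ Set ↥(Vlev m).toSet := powersetEquiv (Vlev m)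
    refine ⟨Finite.of_equiv _ e.symm, ?_⟩
    have hce := Nat.card_congr e
    rw [hce]
    have h1 : Nat.card (Set ↥(Vlev m).toSet) = Nat.card (↥(Vlev m).toSet → Prop) := rfl
    rw [h1, Nat.card_fun, Nat.card_eq_fintype_card (α := Prop), Fintype.card_prop, hcard]
    rfl

end Counting

section MainLemma

lemma no_small_separator (n k : ℕ) (hn : 1 ≤ n) (hk : k < tower (n - 1)) (φ : MLF)
    (hφ : mlfcs φ ≤ k) : ¬ MLFSeparates φ (calV n) (calE n) := by
  intro hsep
  classical
  set s : Finset MLF := (mlfAtoms φ).toFinset with hs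
  set dom := ↥(Vlev.{0} (n + 1)).toSet with hdom
  have hfin : Finite dom := (Vlev_card (n + 1)).1
  set prof : dom → (↥s → Prop) := fun a ψ => sval ψ.1 a.1 with hprof
  have hsingle : ∀ a : ZFSet, a ∈ Vlev (n + 1) → MLFSat (vee {Mpt a}).M none φ := by
    intro a ha
    exact hsep.1 (vee {Mpt a}) ⟨a, ha, rfl⟩
  have hdouble : ∀ a b : ZFSet, a ∈ Vlev (n + 1) → b ∈ Vlev (n + 1) → a ≠ b →
      ¬ MLFSat (vee {Mpt a, Mpt b}).M none φ :=
    fun a b ha hb hne => hsep.2 (vee {Mpt a, Mpt b}) ⟨a, b, ha, hb, hne, rfl⟩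
  by_cases hinj : Function.Injective prof
  · -- counting case: all profiles are realized, in particular the all-false profile
    have hcard_dom : Nat.card dom = tower n := by
      rw [hdom, (Vlev_card (n + 1)).2, ptow_succ_eq_tower]
    have hcard_s : Nat.card ↥s = s.card := by
      rw [Nat.card_eq_fintype_card, Fintype.card_coe]
    have hcard_cod : Nat.card (↥s → Prop) = 2 ^ s.card := by
      rw [Nat.card_fun, Nat.card_eq_fintype_card (α := Prop), Fintype.card_prop, hcard_s]
    have hsle : s.card ≤ tower (n - 1) := by
      calc s.card ≤ (mlfAtoms φ).length := List.toFinset_card_le _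
        _ ≤ mlfcs φ + 1 := mlfAtoms_length φ
        _ ≤ tower (n - 1) := by omega
    have htn : tower n = 2 ^ tower (n - 1) := by
      obtain ⟨m, rfl⟩ : ∃ m, n = m + 1 := ⟨n - 1, by omega⟩
      simp [tower]
    have hge : tower n ≤ 2 ^ s.card := by
      rw [← hcard_dom, ← hcard_cod]
      exact Nat.card_le_card_of_injective prof hinj
    have h2c : 2 ^ s.card ≤ tower n := by
      rw [htn]
      exact Nat.pow_le_pow_right (by norm_num) hsle
    have hbij : Function.Bijective prof :=
      (Nat.bijective_iff_injective_and_card prof).mpr ⟨hinj, by omega⟩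
    obtain ⟨a₀, ha₀⟩ := hbij.2 (fun _ => False)
    have ha₀mem : a₀.1 ∈ Vlev (n + 1) := (zfset_mem_toSet _ _).mp a₀.2
    have hfalse : ∀ ψ ∈ mlfAtoms φ, ¬ sval ψ a₀.1 := by
      intro ψ hψ hsv
      have hc := congrFun ha₀ ⟨ψ, List.mem_toFinset.mpr hψ⟩
      simp only [hprof] at hc
      exact hc ▸ hsv
    have hnepair : (∅ : ZFSet) ≠ {∅} := by
      intro h
      have hm : (∅ : ZFSet) ∈ ({∅} : ZFSet) := ZFSet.mem_singleton.mpr rfl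
      rw [← h] at hm
      exact ZFSet.notMem_empty _ hm
    have hmem0 : (∅ : ZFSet) ∈ Vlev (n + 1) := by
      rw [show Vlev (n + 1) = ZFSet.powerset (Vlev n) from rfl, ZFSet.mem_powerset]
      exact ZFSet.empty_subset _
    have hmem1 : ({∅} : ZFSet) ∈ Vlev (n + 1) := by
      rw [show Vlev (n + 1) = ZFSet.powerset (Vlev n) from rfl, ZFSet.mem_powerset]
      intro z hz
      rw [ZFSet.mem_singleton] at hz
      subst hz
      obtain ⟨m, rfl⟩ : ∃ m, n = m + 1 := ⟨n - 1, by omega⟩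
      rw [show Vlev (m + 1) = ZFSet.powerset (Vlev m) from rfl, ZFSet.mem_powerset]
      exact ZFSet.empty_subset _
    exact hdouble ∅ {∅} hmem0 hmem1 hnepair
      (sat_pair_of_false φ a₀.1 hfalse (hsingle a₀.1 ha₀mem) ∅ {∅})
  · obtain ⟨a, b, heq, hne⟩ := Function.not_injective_iff.mp hinj
    have hne' : a.1 ≠ b.1 := fun h => hne (Subtype.ext h)
    have hagree : ∀ ψ ∈ mlfAtoms φ, (sval ψ a.1 ↔ sval ψ b.1) := by
      intro ψ hψ
      have hc := congrFun heq ⟨ψ, List.mem_toFinset.mpr hψ⟩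
      simp only [hprof] at hc
      exact iff_of_eq hc
    have ha := (zfset_mem_toSet _ _).mp a.2
    have hb := (zfset_mem_toSet _ _).mp b.2
    exact hdouble a.1 b.1 ha hb hne'
      (sat_pair_of_agree φ a.1 b.1 hagree (hsingle a.1 ha))

end MainLemma


/-- **Lemma 17 (Hella–Vilander).**  If `k < tower (n-1)`, then D has a winning strategy
in the game `FS_{m,k}(𝒱ₙ, ℰₙ)`. -/
theorem dwins_calV_calE (n m k : ℕ) (hn : 1 ≤ n) (hk : k < tower (n - 1)) :
    DWins m k (calV n) (calE n) :=
  dwins_of_no_formula m k (calV n) (calE n)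
    (fun φ _ hcs => no_small_separator n k hn hk φ hcs)
end
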